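/- arXiv:2006.14401 — 2 statements merged into one kernel-verified Lean document; each statement's English description precedes it below -/
import Mathlib

section
/- Let (R, m) be a 1-dimensional Cohen-Macaulay local ring which is not a valuation ring, and let I ⊆ m² be an irreducible m-primary ideal with minimal reduction (a). Then λ(I/(a)) ≥ r(R) - 1. -/
open IsLocalRing

/-- The length of a module, realized as the Krull dimension of its lattice of submodules. -/
noncomputable def modLength (R M : Type*) [CommRing R] [AddCommGroup M] [Module R M] :
    WithBot ℕ∞ :=
  Order.krullDim (Submodule R M)

/-- `λ(A/B)`: the length of the quotient of the ideal `A` by `B`. -/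
noncomputable def quotLength (R : Type*) [CommRing R] (A B : Ideal R) : WithBot ℕ∞ :=
  modLength R (↥A ⧸ (Submodule.comap A.subtype B))

/-- An ideal is primary to the maximal ideal (`m`-primary). -/
def IsMaxPrimary (R : Type*) [CommRing R] [IsLocalRing R] (I : Ideal R) : Prop :=
  I ≠ ⊤ ∧ ∃ n : ℕ, (maximalIdeal R) ^ n ≤ I

/-- An ideal is irreducible: it is not the intersection of two strictly larger ideals. -/
def IsIrreducibleIdeal (R : Type*) [CommRing R] (I : Ideal R) : Prop :=
  I ≠ ⊤ ∧ ∀ J K : Ideal R, I = J ⊓ K → I = J ∨ I = K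

/-- Chains with strict consecutive steps up to `n` are strictly monotone on `[0, n]`. -/
lemma stepChain {α : Type*} [Preorder α] (f : ℕ → α) (n : ℕ)
    (h : ∀ k, k < n → f k < f (k + 1)) : ∀ p q, p < q → q ≤ n → f p < f q := by
  intro p q hpq hqn
  induction q with
  | zero => omega
  | succ q ih =>
    rcases Nat.lt_or_ge p q with h' | h'
    · exact lt_trans (ih h' (by omega)) (h q (by omega))
    · have : p = q := by omega
      subst this
      exact h p (by omega)

/-- From `quotLength R A B = r` extract a strict chain of ideals of length `r`
between `B` and `A`. -/
lemma exists_chain_of_quotLength_eq {R : Type*} [CommRing R] (A B : Ideal R) (hBA : B ≤ A)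
    (r : ℕ) (h : quotLength R A B = (r : WithBot ℕ∞)) :
    ∃ D : Fin (r + 1) → Ideal R, StrictMono D ∧ (∀ i, B ≤ D i) ∧ (∀ i, D i ≤ A) := by
  classical
  set K : Submodule R ↥A := Submodule.comap A.subtype B with hK
  have h' : Order.height (⊤ : Submodule R (↥A ⧸ K)) = (r : ℕ∞) := by
    have h2 := Order.height_top_eq_krullDim (α := Submodule R (↥A ⧸ K))
    rw [quotLength, modLength] at h
    rw [h] at h2
    exact_mod_cast h2
  obtain ⟨p, hplast, hplen⟩ := Order.exists_series_of_height_eq_coe _ h'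
  refine ⟨fun i => Submodule.map A.subtype
      (Submodule.comap K.mkQ (p ⟨i.val, by omega⟩)), ?_, ?_, ?_⟩
  · intro i j hij
    have hp : p ⟨i.val, by omega⟩ < p ⟨j.val, by omega⟩ :=
      p.strictMono (Fin.mk_lt_mk.mpr (Fin.lt_def.mp hij))
    refine lt_of_le_of_ne (Submodule.map_mono (Submodule.comap_mono hp.le)) ?_
    intro heq
    exact hp.ne (Submodule.comap_injective_of_surjective (Submodule.mkQ_surjective K)
      (Submodule.map_injective_of_injective A.injective_subtype heq))
  · intro i
    have h1 : B = Submodule.map A.subtype K := by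
      rw [hK, Submodule.map_comap_subtype, inf_eq_right.mpr hBA]
    refine h1.le.trans ?_
    apply Submodule.map_mono
    calc K = Submodule.comap K.mkQ ⊥ := by rw [Submodule.comap_bot, Submodule.ker_mkQ]
    _ ≤ Submodule.comap K.mkQ (p ⟨i.val, by omega⟩) := Submodule.comap_mono bot_le
  · intro i
    exact Submodule.map_subtype_le _ _

/-- A strict chain of ideals of length `n` between `B` and `A` gives `quotLength R A B ≥ n`. -/
lemma le_quotLength_of_chain {R : Type*} [CommRing R] (A B : Ideal R) (n : ℕ)
    (E : Fin (n + 1) → Ideal R) (hE : StrictMono E) (hB : ∀ i, B ≤ E i) (hA : ∀ i, E i ≤ A) :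
    (n : WithBot ℕ∞) ≤ quotLength R A B := by
  classical
  set K : Submodule R ↥A := Submodule.comap A.subtype B with hK
  set Φ : Fin (n + 1) → Submodule R (↥A ⧸ K) :=
    fun i => Submodule.map K.mkQ (Submodule.comap A.subtype (E i)) with hΦ
  have hmono : StrictMono Φ := by
    intro i j hij
    refine lt_of_le_of_ne (Submodule.map_mono (Submodule.comap_mono (hE hij).le)) ?_
    intro heq
    apply (hE hij).ne
    have h2 : Submodule.comap A.subtype (E i) = Submodule.comap A.subtype (E j) := by
      have hKi : K ≤ Submodule.comap A.subtype (E i) := Submodule.comap_mono (hB i)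
      have hKj : K ≤ Submodule.comap A.subtype (E j) := Submodule.comap_mono (hB j)
      have h3 := congrArg (Submodule.comap K.mkQ) heq
      rwa [Submodule.comap_map_mkQ, Submodule.comap_map_mkQ, sup_eq_right.mpr hKi,
        sup_eq_right.mpr hKj] at h3
    have h4 := congrArg (Submodule.map A.subtype) h2
    rwa [Submodule.map_comap_subtype, Submodule.map_comap_subtype,
      inf_eq_right.mpr (hA i), inf_eq_right.mpr (hA j)] at h4
  let s : LTSeries (Submodule R (↥A ⧸ K)) := ⟨n, Φ, fun i => hmono (Fin.castSucc_lt_succ (i := i))⟩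
  have hs := Order.LTSeries.length_le_krullDim s
  simpa [quotLength, modLength, s] using hs

/-- For an irreducible ideal `I`, there is no strict 2-step chain in `[I, I : m]`. -/
lemma socle_small {R : Type*} [CommRing R] [IsLocalRing R] (I : Ideal R)
    (hIirr : IsIrreducibleIdeal R I) (X Y Z : Ideal R) (hIX : I ≤ X) (hXY : X < Y)
    (hYZ : Y < Z) (hZ : Z ≤ I.colon (maximalIdeal R)) : False := by
  obtain ⟨u, huY, huX⟩ := SetLike.exists_of_lt hXY
  obtain ⟨v, hvZ, hvY⟩ := SetLike.exists_of_lt hYZ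
  have hIA : I = (I ⊔ Ideal.span {u}) ⊓ (I ⊔ Ideal.span {v}) := by
    refine le_antisymm (le_inf le_sup_left le_sup_left) ?_
    intro z hz
    obtain ⟨hz1, hz2⟩ := Submodule.mem_inf.mp hz
    obtain ⟨i, hi, w, hw, hz1⟩ := Submodule.mem_sup.mp hz1
    obtain ⟨r', hru⟩ := Ideal.mem_span_singleton'.mp hw
    obtain ⟨i', hi', w', hw', hz2⟩ := Submodule.mem_sup.mp hz2
    obtain ⟨s, hsv⟩ := Ideal.mem_span_singleton'.mp hw'
    by_cases hs : s ∈ maximalIdeal R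
    · have hv' : v ∈ I.colon (maximalIdeal R) := hZ hvZ
      have hsvI : v * s ∈ I := by
        simpa [smul_eq_mul] using (Submodule.mem_colon.mp hv') s hs
      rw [← hz2, ← hsv]
      exact I.add_mem hi' (by rwa [mul_comm] at hsvI)
    · exfalso
      apply hvY
      have hsu : IsUnit s := by
        by_contra hns
        exact hs ((IsLocalRing.mem_maximalIdeal s).mpr (mem_nonunits_iff.mpr hns))
      have hz1' : z = i + r' * u := by rw [← hz1, ← hru]
      have hz2' : z = i' + s * v := by rw [← hz2, ← hsv]
      have hY3 : s * v ∈ Y := by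
        have heq : s * v = (i + r' * u) - i' := by rw [← hz1']; rw [hz2']; ring
        rw [heq]
        exact Y.sub_mem (Y.add_mem (hXY.le (hIX hi)) (Y.mul_mem_left _ huY)) (hXY.le (hIX hi'))
      obtain ⟨s', hs'⟩ := hsu.exists_left_inv
      have hv2 : v = s' * (s * v) := by rw [← mul_assoc, hs', one_mul]
      rw [hv2]
      exact Y.mul_mem_left _ hY3
  rcases hIirr.2 _ _ hIA with h | h
  · exact huX (hIX (h ▸ (le_sup_right (a := I)) (Ideal.mem_span_singleton_self u)))
  · exact hvY (hXY.le (hIX (h ▸ (le_sup_right (a := I)) (Ideal.mem_span_singleton_self v))))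

/-- let `(R, m)` be a one-dimensional Cohen-Macaulay local ring which is not a
valuation ring, and let `I ⊆ m²` be an irreducible `m`-primary ideal with minimal reduction
`(a)`.  Then `λ(I/(a)) ≥ r(R) - 1`, where `r(R)` is the Cohen-Macaulay type of `R`, computed
as the length of the socle `((a) : m)/(a)` of `R/(a)`. -/
theorem length_ge_type_sub_one_of_irreducible
    (R : Type*) [CommRing R] [IsLocalRing R] [IsNoetherianRing R]
    (hdim : ringKrullDim R = 1)
    (hCM : ∃ x ∈ maximalIdeal R, x ∈ nonZeroDivisors R)
    (hnotval : ¬ (maximalIdeal R).IsPrincipal)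
    (I : Ideal R) (hIprim : IsMaxPrimary R I) (hIirr : IsIrreducibleIdeal R I)
    (hIm2 : I ≤ (maximalIdeal R) ^ 2)
    (a : R) (haI : a ∈ I) (hareg : a ∈ nonZeroDivisors R)
    (hred : ∃ n : ℕ, I ^ (n + 1) = Ideal.span {a} * I ^ n)
    (r : ℕ)
    (htype : quotLength R ((Ideal.span {a}).colon (maximalIdeal R)) (Ideal.span {a})
      = (r : WithBot ℕ∞)) :
    quotLength R I (Ideal.span {a}) ≥ ((r - 1 : ℕ) : WithBot ℕ∞) := by
  classical
  set m : Ideal R := maximalIdeal R with hm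
  set Ja : Ideal R := Ideal.span {a} with hJa
  set J1 : Ideal R := Ja.colon m with hJ1
  rcases Nat.eq_zero_or_pos r with hr0 | hrpos
  · subst hr0
    have : ((0 - 1 : ℕ) : WithBot ℕ∞) = 0 := by norm_num
    rw [ge_iff_le, this, quotLength, modLength]
    exact Order.krullDim_nonneg
  have hJaI : Ja ≤ I := by
    rw [hJa, Ideal.span_le]
    simpa using haI
  have hJaJ1 : Ja ≤ J1 := by
    intro x hx
    rw [hJ1, Submodule.mem_colon] -- might need Ideal version; adjust
    intro p hp
    simpa [smul_eq_mul] using Ideal.mul_mem_right p _ hx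
  have hJ1I : J1 ≤ I.colon m := by
    intro x hx
    rw [Submodule.mem_colon]
    intro p hp
    exact hJaI ((Submodule.mem_colon.mp hx) p hp)

  have hIcolon : I ≤ I.colon m := by
    intro x hx
    rw [Submodule.mem_colon]
    intro p hp
    simpa [smul_eq_mul] using I.mul_mem_right p hx
  obtain ⟨D, hD, hDB, hDA⟩ := exists_chain_of_quotLength_eq J1 Ja hJaJ1 r htype
  set d : ℕ → Ideal R := fun k => D ⟨min k r, by omega⟩ with hd
  have hdlt : ∀ k l, k < l → l ≤ r → d k < d l := by
    intro k l h1 h2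
    apply hD
    rw [Fin.lt_def]
    simp only
    omega
  have hdmono : ∀ k l, k ≤ l → d k ≤ d l := by
    intro k l h1
    apply hD.monotone
    rw [Fin.le_def]
    simp only
    omega
  set G : ℕ → Ideal R := fun k => d k ⊓ I with hG
  set F : ℕ → Ideal R := fun k => d k ⊔ I with hF
  have hGmono : ∀ k l, k ≤ l → G k ≤ G l := fun k l h =>
    inf_le_inf (hdmono k l h) le_rfl
  have hFmono : ∀ k l, k ≤ l → F k ≤ F l := fun k l h =>
    sup_le_sup (hdmono k l h) le_rfl
  have hJaG : ∀ k, Ja ≤ G k := fun k => le_inf (hDB _) hJaI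
  have hGI : ∀ k, G k ≤ I := fun k => inf_le_right
  have hIF : ∀ k, I ≤ F k := fun k => le_sup_right
  have hFcolon : ∀ k, F k ≤ I.colon m := fun k =>
    sup_le (le_trans (hDA _) hJ1I) hIcolon
  have hGstrict : ∀ k, k < r → F k = F (k + 1) → G k < G (k + 1) := by
    intro k hk hFeq
    refine lt_of_le_of_ne (hGmono k (k + 1) (by omega)) ?_
    intro hGeq
    have hdk : d k < d (k + 1) := hdlt k (k + 1) (by omega) (by omega)
    apply hdk.ne
    have hlek : d k ≤ d (k + 1) := hdk.le
    have hmod := sup_inf_assoc_of_le (y := I) hlek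
    have e1 : d (k + 1) = (d k ⊔ I) ⊓ d (k + 1) := by
      rw [show d k ⊔ I = d (k + 1) ⊔ I from hFeq]
      exact (inf_eq_right.mpr le_sup_left).symm
    have e2 : I ⊓ d (k + 1) = I ⊓ d k := by
      rw [inf_comm I (d (k + 1)), inf_comm I (d k)]
      exact hGeq.symm
    rw [e1, hmod, e2, inf_comm I (d k), sup_inf_self]
  have hFone : ∀ j1 j2, j1 < j2 → j2 < r → F j1 < F (j1 + 1) → F j2 < F (j2 + 1) → False := by
    intro j1 j2 h12 h2r hF1 hF2
    exact socle_small I hIirr (F j1) (F (j1 + 1)) (F (j2 + 1)) (hIF _) hF1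
      (lt_of_le_of_lt (hFmono _ _ (by omega)) hF2) (hFcolon _)
  obtain ⟨f', hstep', hlow, hhigh⟩ :
      ∃ f' : ℕ → Ideal R, (∀ i, i < r - 1 → f' i < f' (i + 1)) ∧
        (∀ i, Ja ≤ f' i) ∧ (∀ i, f' i ≤ I) := by
    by_cases hbad : ∃ j, j < r ∧ F j < F (j + 1)
    · obtain ⟨j, hjr, hFj⟩ := hbad
      have hGs' : ∀ k, k < r → k ≠ j → G k < G (k + 1) := by
        intro k hk hkj
        have hFeq : F k = F (k + 1) := by
          refine le_antisymm (hFmono k (k + 1) (by omega)) ?_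
          by_contra hnle
          have hFk : F k < F (k + 1) := lt_of_le_of_ne (hFmono k (k + 1) (by omega))
            (fun h => hnle h.ge)
          rcases Nat.lt_or_ge k j with hkj' | hkj'
          · exact hFone k j hkj' hjr hFk hFj
          · exact hFone j k (by omega) hk hFj hFk
        exact hGstrict k hk hFeq
      refine ⟨fun i => G (if i ≤ j then i else i + 1), ?_, fun i => hJaG _, fun i => hGI _⟩
      intro i hi
      by_cases h1 : i + 1 ≤ j
      · simp only [if_pos (by omega : i ≤ j), if_pos h1]
        exact hGs' i (by omega) (by omega)
      · by_cases h2 : i ≤ j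
        · have hij : i = j := by omega
          simp only [if_pos h2, if_neg h1]
          subst hij
          calc G i ≤ G (i + 1) := hGmono i (i + 1) (by omega)
          _ < G (i + 1 + 1) := hGs' (i + 1) (by omega) (by omega)
        · simp only [if_neg h2, if_neg (by omega : ¬ i + 1 ≤ j)]
          exact hGs' (i + 1) (by omega) (by omega)
    · push_neg at hbad
      have hGs : ∀ k, k < r → G k < G (k + 1) := by
        intro k hk
        have hFeq : F k = F (k + 1) :=
          ((hFmono k (k + 1) (by omega)).lt_or_eq).resolve_left (hbad k hk)
        exact hGstrict k hk hFeq
      exact ⟨G, fun i hi => hGs i (by omega), fun i => hJaG _, fun i => hGI _⟩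
  have hEfin : StrictMono (fun i : Fin ((r - 1) + 1) => f' i.val) := by
    intro i j hij
    exact stepChain f' (r - 1) hstep' i.val j.val (by exact hij) (by omega)
  have := le_quotLength_of_chain I Ja (r - 1) _ hEfin (fun i => hlow _) (fun i => hhigh _)
  exact this
end

section
/- Let (R, m) be a 1-dimensional Cohen-Macaulay local ring which is not a DVR, and let A = m :_Q m = Hom(m, m) computed in the total ring of fractions Q. Then A = R :_Q m, and the minimal number of generators of A as an R-module equals r(R) + 1, where r(R) is the Cohen-Macaulay type of R. -/
open IsLocalRing

/-- Minimal number of generators of a submodule. -/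
noncomputable def nuSub (R Q : Type*) [CommRing R] [CommRing Q] [Algebra R Q]
    (N : Submodule R Q) : ℕ :=
  sInf {n | ∃ s : Finset Q, s.card = n ∧ Submodule.span R (s : Set Q) = N}

section Helpers

open Module Submodule

section SurjTransfer

variable {R k V : Type*} [CommRing R] [CommRing k] [AddCommGroup V]
  [Module R V] [Module k V] (f : R →+* k) (hf : Function.Surjective f)
  (hsmul : ∀ (r : R) (v : V), f r • v = r • v)

/-- Transfer a `k`-submodule to an `R`-submodule along a surjective ring hom. -/
def restrictSurj (q : Submodule k V) : Submodule R V where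
  carrier := q
  add_mem' := add_mem
  zero_mem' := q.zero_mem
  smul_mem' := fun r v h => by rw [← hsmul r v]; exact q.smul_mem _ h

/-- Transfer an `R`-submodule to a `k`-submodule along a surjective ring hom. -/
def extendSurj (p : Submodule R V) : Submodule k V where
  carrier := p
  add_mem' := add_mem
  zero_mem' := p.zero_mem
  smul_mem' := by
    intro c v h
    obtain ⟨r, rfl⟩ := hf c
    rw [hsmul r v]; exact p.smul_mem _ h

/-- The lattice of submodules is unchanged under a surjective change of scalars. -/
def submoduleOrderIsoOfSurj : Submodule R V ≃o Submodule k V where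
  toFun := extendSurj f hf hsmul
  invFun := restrictSurj f hsmul
  left_inv := fun p => by ext v; rfl
  right_inv := fun q => by ext v; rfl
  map_rel_iff' := by intro p q; rfl

include hf hsmul in
theorem span_surj_eq (s : Set V) :
    (Submodule.span R s : Set V) = (Submodule.span k s : Set V) := by
  apply Set.Subset.antisymm
  · exact Submodule.span_le (p := restrictSurj f hsmul (Submodule.span k s)) |>.2
      Submodule.subset_span
  · exact Submodule.span_le (p := extendSurj f hf hsmul (Submodule.span R s)) |>.2
      Submodule.subset_span

include hf hsmul in
theorem span_surj_top_iff (s : Set V) :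
    Submodule.span R s = ⊤ ↔ Submodule.span k s = ⊤ := by
  constructor <;> intro h <;>
    · apply SetLike.coe_injective
      rw [Submodule.top_coe]
      have := span_surj_eq f hf hsmul s
      first
        | (rw [h] at this; rw [← this]; rfl)
        | (rw [h] at this; rw [this]; rfl)

include hf hsmul in
theorem finite_surj (hfin : Module.Finite R V) : Module.Finite k V := by
  obtain ⟨s, hs⟩ := hfin.fg_top
  exact ⟨⟨s, (span_surj_top_iff f hf hsmul (s : Set V)).1 hs⟩⟩

end SurjTransfer

section KrullFinrank

variable {k V : Type*} [DivisionRing k] [AddCommGroup V] [Module k V]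

theorem krullDim_submodule_eq_finrank [FiniteDimensional k V] :
    Order.krullDim (Submodule k V) = (finrank k V : WithBot ℕ∞) := by
  apply le_antisymm
  · apply iSup_le
    intro p
    have key : ∀ i : Fin (p.length + 1), (i : ℕ) ≤ finrank k (p i) := by
      intro i
      induction i using Fin.induction with
      | zero => simp
      | succ j ih =>
        have hlt : p j.castSucc < p j.succ := p.step j
        have := Submodule.finrank_lt_finrank_of_lt hlt
        simp only [Fin.val_succ, Fin.coe_castSucc] at *
        omega
    have hlast := key (Fin.last _)
    simp only [Fin.val_last] at hlast
    have : p.length ≤ finrank k V := hlast.trans (Submodule.finrank_le _)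
    exact_mod_cast Nat.cast_le.mpr this
  · set d := finrank k V with hd
    let b := finBasis k V
    have hbli := b.linearIndependent
    let f : Fin (d + 1) → Submodule k V :=
      fun i => Submodule.span k (b '' {j : Fin d | (j : ℕ) < (i : ℕ)})
    have hstep : ∀ i : Fin d, f i.castSucc < f i.succ := by
      intro i
      refine lt_of_le_of_ne (Submodule.span_mono (Set.image_mono ?_)) ?_
      · intro j hj
        have hj' : (j : ℕ) < (i.castSucc : ℕ) := hj
        show (j : ℕ) < (i.succ : ℕ)
        rw [Fin.val_succ]; rw [Fin.val_castSucc] at hj'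
        omega
      · intro hEq
        have hmem : b i ∈ f i.succ :=
          Submodule.subset_span ⟨i, by show (i : ℕ) < (i.succ : ℕ); rw [Fin.val_succ]; exact Nat.lt_succ_self _, rfl⟩
        rw [← hEq] at hmem
        have : (i : Fin d) ∉ {j : Fin d | (j : ℕ) < (i.castSucc : ℕ)} := by simp
        exact hbli.notMem_span_image this hmem
    let p : LTSeries (Submodule k V) := ⟨d, f, hstep⟩
    have := Order.LTSeries.length_le_krullDim p
    exact this

end KrullFinrank

section nu

variable {R Q : Type*} [CommRing R] [CommRing Q] [Algebra R Q]

theorem nuSub_map_equiv (e : Q ≃ₗ[R] Q) (N : Submodule R Q) :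
    nuSub R Q (N.map (e : Q →ₗ[R] Q)) = nuSub R Q N := by
  classical
  unfold nuSub
  congr 1
  ext n
  constructor
  · rintro ⟨s, hc, hs⟩
    refine ⟨s.image e.symm, by rw [Finset.card_image_of_injective _ e.symm.injective, hc], ?_⟩
    rw [Finset.coe_image, Submodule.span_image_linearEquiv, hs]
    ext z
    constructor
    · rintro ⟨w, ⟨v, hv, rfl⟩, rfl⟩; simpa using hv
    · intro hz; exact ⟨e z, ⟨z, hz, rfl⟩, by simp⟩
  · rintro ⟨s, hc, hs⟩
    refine ⟨s.image e, by rw [Finset.card_image_of_injective _ e.injective, hc], ?_⟩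
    rw [Finset.coe_image]
    show Submodule.span R (⇑e '' (s : Set Q)) = _
    rw [Submodule.span_image_linearEquiv, hs]

variable {A : Type*} [CommRing A] [Algebra R A]

theorem nuSub_map_injective (f : A →ₗ[R] Q) (hf : Function.Injective f)
    (N : Submodule R A) :
    nuSub R Q (N.map f) = nuSub R A N := by
  classical
  unfold nuSub
  congr 1
  ext n
  constructor
  · rintro ⟨s, hc, hs⟩
    have hsub : (s : Set Q) ⊆ Set.range f := by
      intro y hy
      have : y ∈ N.map f := by rw [← hs]; exact Submodule.subset_span hy
      obtain ⟨a, _, rfl⟩ := this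
      exact ⟨a, rfl⟩
    let g : Q → A := fun y => Function.invFun f y
    have hfg : ∀ y ∈ (s : Set Q), f (g y) = y := fun y hy =>
      Function.invFun_eq (hsub hy)
    refine ⟨s.image g, ?_, ?_⟩
    · rw [Finset.card_image_of_injOn, hc]
      intro a ha b hb hab
      rw [← hfg a ha, ← hfg b hb, hab]
    · apply Submodule.map_injective_of_injective hf
      have himg : ⇑f '' (g '' (s : Set Q)) = (s : Set Q) := by
        rw [Set.image_image]
        calc (fun y => f (g y)) '' (s : Set Q) = id '' (s : Set Q) :=
              Set.image_congr fun a ha => hfg a ha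
          _ = (s : Set Q) := Set.image_id _
      rw [Finset.coe_image, ← Submodule.span_image, himg, hs]
  · rintro ⟨s, hc, hs⟩
    refine ⟨s.image f, by rw [Finset.card_image_of_injective _ hf, hc], ?_⟩
    rw [Finset.coe_image, Submodule.span_image, hs]

end nu

end Helpers

set_option maxHeartbeats 2000000 in
/-- let `(R, m)` be a one-dimensional Cohen-Macaulay local ring which is not a
DVR, and let `A = m :_Q m = Hom(m, m)` computed in the total ring of fractions `Q` (as the
submodule quotient `mQ / mQ`).  Then `A = R :_Q m` (that is, `mQ / mQ = 1 / mQ`), and the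
minimal number of generators of `A` as an `R`-module equals `r(R) + 1`, where the type
`r(R)` is the length of the socle `((x) : m)/(x)` of `R/(x)` for a regular `x ∈ m`. -/
theorem endomorphisms_of_maximal_ideal
    (R : Type*) [CommRing R] [IsLocalRing R] [IsNoetherianRing R]
    (hdim : ringKrullDim R = 1)
    (hCM : ∃ x ∈ maximalIdeal R, x ∈ nonZeroDivisors R)
    (hnotDVR : ¬ (maximalIdeal R).IsPrincipal)
    (x : R) (hxm : x ∈ maximalIdeal R) (hxreg : x ∈ nonZeroDivisors R)
    (r : ℕ)
    (htype : quotLength R ((Ideal.span {x}).colon (maximalIdeal R)) (Ideal.span {x})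
      = (r : WithBot ℕ∞)) :
    (Submodule.map (Algebra.linearMap R (FractionRing R)) (maximalIdeal R)) /
        (Submodule.map (Algebra.linearMap R (FractionRing R)) (maximalIdeal R)) =
      (1 : Submodule R (FractionRing R)) /
        (Submodule.map (Algebra.linearMap R (FractionRing R)) (maximalIdeal R)) ∧
    nuSub R (FractionRing R)
        ((Submodule.map (Algebra.linearMap R (FractionRing R)) (maximalIdeal R)) /
          (Submodule.map (Algebra.linearMap R (FractionRing R)) (maximalIdeal R)))
      = r + 1 := by
  classical
  set Q := FractionRing R
  set alg := Algebra.linearMap R Q with halg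
  have hinj : Function.Injective (algebraMap R Q) := IsFractionRing.injective R Q
  set m := maximalIdeal R with hm
  set mQ := Submodule.map alg m with hmQ
  have hmQ1 : mQ ≤ 1 := by
    rintro z ⟨a, _, rfl⟩
    rw [Submodule.one_eq_range]
    exact ⟨a, rfl⟩
  -- Part 1
  have part1 : mQ / mQ = (1 : Submodule R Q) / mQ := by
    apply le_antisymm
    · intro q hq
      rw [Submodule.mem_div_iff_forall_mul_mem] at hq ⊢
      exact fun z hz => hmQ1 (hq z hz)
    · intro q hq
      rw [Submodule.mem_div_iff_forall_mul_mem] at hq ⊢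
      rintro z ⟨a, ha, rfl⟩
      by_contra hq'
      -- q * alg a ∈ 1, so q * alg a = alg c with c a unit; m is then principal
      have h1 : q * alg a ∈ (1 : Submodule R Q) := hq _ ⟨a, ha, rfl⟩
      rw [Submodule.one_eq_range] at h1
      obtain ⟨c, hc⟩ := h1
      have hcu : IsUnit c := by
        by_contra hcu
        exact hq' ⟨c, (mem_maximalIdeal c).mpr hcu, hc⟩
      apply hnotDVR
      refine ⟨⟨a, le_antisymm ?_ ?_⟩⟩
      · intro s hs
        have h2 : q * alg s ∈ (1 : Submodule R Q) := hq _ ⟨s, hs, rfl⟩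
        rw [Submodule.one_eq_range] at h2
        obtain ⟨cs, hcs⟩ := h2
        have key : c * s = a * cs := by
          apply hinj
          calc algebraMap R Q (c * s) = (q * alg a) * alg s := by
                rw [map_mul]; rw [← hc]; rfl
            _ = (q * alg s) * alg a := by ring
            _ = algebraMap R Q (a * cs) := by
                rw [map_mul, ← hcs]
                simp only [halg, Algebra.linearMap_apply]
                ring
        rw [Submodule.mem_span_singleton]
        refine ⟨↑hcu.unit⁻¹ * cs, ?_⟩
        have hcs' : (hcu.unit : R) * s = a * cs := by rw [hcu.unit_spec]; exact key
        calc (↑hcu.unit⁻¹ * cs) • a = ↑hcu.unit⁻¹ * (a * cs) := by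
              rw [smul_eq_mul]; ring
          _ = ↑hcu.unit⁻¹ * (↑hcu.unit * s) := by rw [← hcs']
          _ = s := by rw [Units.inv_mul_cancel_left]
      · rw [Submodule.span_le, Set.singleton_subset_iff]; exact ha
  refine ⟨part1, ?_⟩
  -- Part 2
  set I := (Ideal.span {x}).colon m with hI
  have hxI : x ∈ I := by
    rw [Submodule.mem_colon]
    intro p hp
    rw [smul_eq_mul, Ideal.mem_span_singleton]
    exact ⟨p, rfl⟩
  have hmI : m * I ≤ Ideal.span {x} := by
    rw [Ideal.mul_le]
    intro a ha c hc
    have := Submodule.mem_colon.mp hc a ha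
    rwa [smul_eq_mul, mul_comm] at this
  have hu : IsUnit (algebraMap R Q x) := IsLocalization.map_units Q ⟨x, hxreg⟩
  have hax : (hu.unit : Q) = alg x := hu.unit_spec
  let e : Q ≃ₗ[R] Q :=
    LinearEquiv.ofLinear (LinearMap.mulLeft R (hu.unit : Q))
      (LinearMap.mulLeft R ((hu.unit⁻¹ : Qˣ) : Q))
      (by ext z
          show (hu.unit : Q) * ((hu.unit⁻¹ : Qˣ) * z) = z
          rw [Units.mul_inv_cancel_left])
      (by ext z
          show ((hu.unit⁻¹ : Qˣ) : Q) * ((hu.unit : Qˣ) * z) = z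
          rw [Units.inv_mul_cancel_left])
  have he : ∀ z : Q, e z = alg x * z := fun z => by
    show (hu.unit : Q) * z = alg x * z
    rw [hax]
  have hesymm : ∀ z : Q, e.symm z = ((hu.unit⁻¹ : Qˣ) : Q) * z := fun z => rfl
  have he' : ∀ z : Q, (e : Q →ₗ[R] Q) z = alg x * z := fun z => by
    show (hu.unit : Q) * z = alg x * z
    rw [hax]
  -- A = x⁻¹ I in Q
  have hIA : Submodule.map alg (I : Submodule R R)
      = Submodule.map (e : Q →ₗ[R] Q) ((1 : Submodule R Q) / mQ) := by
    ext z
    constructor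
    · rintro ⟨c, hc, rfl⟩
      refine ⟨((hu.unit⁻¹ : Qˣ) : Q) * alg c, ?_, ?_⟩
      · rw [SetLike.mem_coe, Submodule.mem_div_iff_forall_mul_mem]
        rintro w ⟨a, ha, rfl⟩
        have hca : c * a ∈ Ideal.span {x} := by
          have := Submodule.mem_colon.mp hc a ha
          rwa [smul_eq_mul] at this
        rw [Ideal.mem_span_singleton] at hca
        obtain ⟨d, hd⟩ := hca
        rw [Submodule.one_eq_range]
        refine ⟨d, ?_⟩
        have : alg c * alg a = alg x * alg d := by
          simp only [halg, Algebra.linearMap_apply, ← map_mul, ← hd]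
        calc (Algebra.linearMap R Q) d
            = ((hu.unit⁻¹ : Qˣ) : Q) * (alg x * alg d) := by
              rw [← hax, ← mul_assoc, Units.inv_mul, one_mul]
          _ = ((hu.unit⁻¹ : Qˣ) : Q) * alg c * alg a := by rw [← this]; ring
      · show e _ = _
        rw [he, ← mul_assoc, ← hax, Units.mul_inv, one_mul]
    · rintro ⟨q, hq, rfl⟩
      rw [SetLike.mem_coe, Submodule.mem_div_iff_forall_mul_mem] at hq
      have h1 : q * alg x ∈ (1 : Submodule R Q) := hq _ ⟨x, hxm, rfl⟩
      rw [Submodule.one_eq_range] at h1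
      obtain ⟨b, hb⟩ := h1
      refine ⟨b, ?_, ?_⟩
      · rw [SetLike.mem_coe, Submodule.mem_colon]
        intro a ha
        rw [smul_eq_mul, Ideal.mem_span_singleton]
        have h2 : q * alg a ∈ (1 : Submodule R Q) := hq _ ⟨a, ha, rfl⟩
        rw [Submodule.one_eq_range] at h2
        obtain ⟨ca, hca⟩ := h2
        refine ⟨ca, hinj ?_⟩
        calc algebraMap R Q (b * a) = alg b * alg a := by
              simp only [halg, Algebra.linearMap_apply, map_mul]
          _ = (q * alg x) * alg a := by rw [hb]
          _ = alg x * (q * alg a) := by ring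
          _ = alg x * alg ca := by rw [hca]
          _ = algebraMap R Q (x * ca) := by
              simp only [halg, Algebra.linearMap_apply, map_mul]
      · show alg b = e q
        rw [he, mul_comm]; exact hb
  have hxnot : x ∉ m * I := by
    intro hx
    -- then alg x ∈ mQ * map alg I ≤ map e mQ, forcing 1 ∈ m
    have hmul : ∀ y ∈ m * I, alg y ∈ mQ * Submodule.map alg (I : Submodule R R) := by
      intro y hy
      refine Submodule.mul_induction_on hy ?_ ?_
      · intro a ha c hc
        have : alg (a * c) = alg a * alg c := by
          simp only [halg, Algebra.linearMap_apply, map_mul]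
        rw [this]
        exact Submodule.mul_mem_mul ⟨a, ha, rfl⟩ ⟨c, hc, rfl⟩
      · intro z w hz hw
        rw [map_add]; exact add_mem hz hw
    have hle : mQ * Submodule.map alg (I : Submodule R R)
        ≤ Submodule.map (e : Q →ₗ[R] Q) mQ := by
      rw [hIA]
      apply Submodule.mul_le.mpr
      rintro z hz w ⟨q, hq, rfl⟩
      rw [SetLike.mem_coe] at hq
      have hq' : q ∈ mQ / mQ := by rw [part1]; exact hq
      rw [Submodule.mem_div_iff_forall_mul_mem] at hq'
      refine ⟨q * z, hq' z hz, ?_⟩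
      rw [he', he']; ring
    obtain ⟨w, ⟨a, ha, rfl⟩, hw⟩ := hle (hmul x hx)
    rw [he'] at hw
    have h1a : (1 : R) = a := by
      apply hinj
      apply hu.mul_left_cancel
      rw [map_one, mul_one]
      exact hw.symm
    exact (Ideal.ne_top_iff_one m).mp (IsLocalRing.maximalIdeal.isMaximal R).ne_top
      (h1a ▸ ha)
  -- reduce nuSub over Q to nuSub of the ideal I
  have halginj : Function.Injective ⇑alg := hinj
  have hnu1 : nuSub R Q (mQ / mQ) = nuSub R R (I : Submodule R R) := by
    rw [part1, ← nuSub_map_equiv e ((1 : Submodule R Q) / mQ), ← hIA,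
      nuSub_map_injective alg halginj]
  rw [hnu1]
  -- Stage B: compute the minimal number of generators of I
  set k := IsLocalRing.ResidueField R with hk
  set N1 : Submodule R ↥I := Submodule.comap (I : Submodule R R).subtype
    ((m * I : Ideal R) : Submodule R R) with hN1
  set N2 : Submodule R ↥I := Submodule.comap (I : Submodule R R).subtype
    ((Ideal.span {x} : Ideal R) : Submodule R R) with hN2
  have hN12 : N1 ≤ N2 := fun y hy => hmI hy
  set V := (↥I ⧸ N2) with hV
  set M := (↥I ⧸ N1) with hM
  have htorV : Module.IsTorsionBySet R V (m : Set R) := by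
    rw [Module.isTorsionBySet_quotient_iff]
    intro y a ha
    show (a • y : ↥I) ∈ N2
    rw [Submodule.mem_comap]
    have := Submodule.mem_colon.mp y.2 a ha
    rwa [smul_eq_mul, mul_comm] at this
  have htorM : Module.IsTorsionBySet R M (m : Set R) := by
    rw [Module.isTorsionBySet_quotient_iff]
    intro y a ha
    show (a • y : ↥I) ∈ N1
    rw [Submodule.mem_comap]
    exact Ideal.mul_mem_mul ha y.2
  letI instV : Module k V := htorV.module
  letI instM : Module k M := htorM.module
  have hsmulV : ∀ (c : R) (v : V), (residue R c) • v = c • v := fun c v => rfl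
  have hsmulM : ∀ (c : R) (v : M), (residue R c) • v = c • v := fun c v => rfl
  have hIfin : Module.Finite R ↥(I : Submodule R R) :=
    Module.Finite.iff_fg.mpr (IsNoetherian.noetherian _)
  haveI hVfinR : Module.Finite R V := Module.Finite.quotient R _
  haveI hMfinR : Module.Finite R M := Module.Finite.quotient R _
  haveI hVfin : Module.Finite k V :=
    finite_surj (residue R) Ideal.Quotient.mk_surjective hsmulV hVfinR
  haveI hMfin : Module.Finite k M :=
    finite_surj (residue R) Ideal.Quotient.mk_surjective hsmulM hMfinR
  -- finrank of V is r
  have hrV : Module.finrank k V = r := by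
    have h1 : Order.krullDim (Submodule R V) = (r : WithBot ℕ∞) := htype
    have h2 := Order.krullDim_eq_of_orderIso
      (submoduleOrderIsoOfSurj (residue R) Ideal.Quotient.mk_surjective hsmulV)
    rw [h2, krullDim_submodule_eq_finrank] at h1
    exact_mod_cast h1
  -- the comparison map M → V
  let g : M →ₗ[R] V := Submodule.mapQ N1 N2 LinearMap.id hN12
  let g' : M →ₗ[k] V :=
    { toFun := g
      map_add' := g.map_add
      map_smul' := by
        rintro ⟨c⟩ v
        exact g.map_smul c v }
  have hgsurj : Function.Surjective g' := by
    intro v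
    obtain ⟨y, rfl⟩ := Submodule.Quotient.mk_surjective N2 v
    exact ⟨Submodule.Quotient.mk y, rfl⟩
  have hxM : (Submodule.Quotient.mk (⟨x, hxI⟩ : ↥I) : M) ≠ 0 := by
    intro h
    rw [Submodule.Quotient.mk_eq_zero] at h
    exact hxnot h
  have hxker : (Submodule.Quotient.mk (⟨x, hxI⟩ : ↥I) : M) ∈ LinearMap.ker g' := by
    show g (Submodule.Quotient.mk (⟨x, hxI⟩ : ↥I)) = 0
    have : g (Submodule.Quotient.mk (⟨x, hxI⟩ : ↥I))
        = (Submodule.Quotient.mk (⟨x, hxI⟩ : ↥I) : V) := rfl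
    rw [this, Submodule.Quotient.mk_eq_zero]
    show x ∈ Ideal.span {x}
    exact Ideal.mem_span_singleton_self x
  have hlowM : r + 1 ≤ Module.finrank k M := by
    have hrn := LinearMap.finrank_range_add_finrank_ker g'
    have hrange : LinearMap.range g' = ⊤ := LinearMap.range_eq_top.mpr hgsurj
    rw [hrange, finrank_top] at hrn
    have hker : 0 < Module.finrank k ↥(LinearMap.ker g') := by
      rw [Module.finrank_pos_iff]
      exact ⟨⟨⟨_, hxker⟩, 0, by simp [Subtype.ext_iff, hxM]⟩⟩
    omega
  -- a generating set of size ≤ r + 1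
  let b := Module.finBasis k V
  let c : Fin (Module.finrank k V) → ↥I :=
    fun i => Function.surjInv (Submodule.Quotient.mk_surjective N2) (b i)
  have hc : ∀ i, (Submodule.Quotient.mk (c i) : V) = b i :=
    fun i => Function.surjInv_eq (Submodule.Quotient.mk_surjective N2) (b i)
  let t : Finset R := (Finset.univ.image fun i => ((c i : ↥I) : R)) ∪ {x}
  have htcard : t.card ≤ r + 1 := by
    refine (Finset.card_union_le _ _).trans ?_
    have h1 : (Finset.univ.image fun i => ((c i : ↥I) : R)).card ≤ Module.finrank k V :=
      Finset.card_image_le.trans (by simp)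
    simp only [Finset.card_singleton]
    omega
  have htspan : Submodule.span R (t : Set R) = (I : Submodule R R) := by
    apply le_antisymm
    · rw [Submodule.span_le]
      intro y hy
      rw [Finset.coe_union, Set.mem_union] at hy
      rcases hy with hy | hy
      · simp only [Finset.coe_image, Set.mem_image] at hy
        obtain ⟨i, _, rfl⟩ := hy
        exact (c i).2
      · simp only [Finset.coe_singleton, Set.mem_singleton_iff] at hy
        subst hy; exact hxI
    · intro y hy
      have hbspan : Submodule.span k (Set.range ⇑b) = ⊤ := b.span_eq
      have hrange : Set.range ⇑b = ⇑N2.mkQ '' Set.range c := by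
        ext v
        constructor
        · rintro ⟨i, rfl⟩; exact ⟨c i, ⟨i, rfl⟩, hc i⟩
        · rintro ⟨_, ⟨i, rfl⟩, rfl⟩; exact ⟨i, (hc i).symm⟩
      rw [hrange, ← span_surj_top_iff (residue R) Ideal.Quotient.mk_surjective hsmulV,
        Submodule.span_image] at hbspan
      have hz : (⟨y, hy⟩ : ↥I) ∈ Submodule.span R (Set.range c) ⊔ N2 := by
        have h4 := congrArg (Submodule.comap N2.mkQ) hbspan
        rw [Submodule.comap_map_mkQ, Submodule.comap_top, sup_comm] at h4
        rw [h4]; trivial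
      obtain ⟨v, hv, w', hw', hvw⟩ := Submodule.mem_sup.mp hz
      have hy' : y = (v : R) + (w' : R) := congrArg Subtype.val hvw.symm
      rw [hy']
      apply Submodule.add_mem
      · have hmem : (v : R) ∈ Submodule.map (I : Submodule R R).subtype
            (Submodule.span R (Set.range c)) := ⟨v, hv, rfl⟩
        rw [Submodule.map_span] at hmem
        have hsubset : ⇑(I : Submodule R R).subtype '' Set.range c ⊆ (t : Set R) := by
          rintro _ ⟨_, ⟨i, rfl⟩, rfl⟩
          rw [Finset.coe_union, Set.mem_union]
          left
          rw [Finset.coe_image]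
          exact ⟨i, by simp, rfl⟩
        exact Submodule.span_mono hsubset hmem
      · have hw2 : (w' : R) ∈ Submodule.span R {x} := hw'
        have hsubset : ({x} : Set R) ⊆ (t : Set R) := by
          rw [Set.singleton_subset_iff, Finset.coe_union, Set.mem_union]
          right; simp
        exact Submodule.span_mono hsubset hw2
  unfold nuSub
  have hmem_t : t.card ∈ {n | ∃ s : Finset R, s.card = n ∧
      Submodule.span R (s : Set R) = (I : Submodule R R)} := ⟨t, rfl, htspan⟩
  apply le_antisymm
  · exact (Nat.sInf_le hmem_t).trans htcard
  · apply le_csInf ⟨t.card, hmem_t⟩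
    rintro n ⟨s, rfl, hspan⟩
    let u : Finset ↥I := s.attach.image fun a =>
      (⟨a.1, by rw [← hspan]; exact Submodule.subset_span a.2⟩ : ↥I)
    have hu_span : Submodule.span R (u : Set ↥I) = ⊤ := by
      apply Submodule.map_injective_of_injective (I : Submodule R R).injective_subtype
      rw [Submodule.map_span, Submodule.map_top, Submodule.range_subtype]
      have himg : ⇑(I : Submodule R R).subtype '' (u : Set ↥I) = (s : Set R) := by
        ext z
        constructor
        · rintro ⟨w0, hw0, rfl⟩
          rw [Finset.mem_coe, Finset.mem_image] at hw0
          obtain ⟨a, _, rfl⟩ := hw0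
          exact a.2
        · intro hz
          refine ⟨⟨z, by rw [← hspan]; exact Submodule.subset_span hz⟩, ?_, rfl⟩
          rw [Finset.mem_coe, Finset.mem_image]
          exact ⟨⟨z, hz⟩, Finset.mem_attach _ _, rfl⟩
      rw [himg, hspan]
    let w : Finset M := u.image N1.mkQ
    have hw_span : Submodule.span R (w : Set M) = ⊤ := by
      rw [Finset.coe_image, Submodule.span_image, hu_span, Submodule.map_top,
        Submodule.range_mkQ]
    rw [span_surj_top_iff (residue R) Ideal.Quotient.mk_surjective hsmulM] at hw_span
    have h1 : Module.finrank k M ≤ w.card := by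
      calc Module.finrank k M = Module.finrank k ↥(⊤ : Submodule k M) :=
            (finrank_top k M).symm
        _ = Module.finrank k ↥(Submodule.span k (w : Set M)) := by rw [hw_span]
        _ ≤ w.card := finrank_span_finset_le_card w
    have h3 : w.card ≤ s.card := Finset.card_image_le.trans
      (Finset.card_image_le.trans (by rw [Finset.card_attach]))
    omega
end
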